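/- Let W_{1,α²} (α ≠ 0) be the Lie algebra with basis {V_n : n ≥ 1} and the structure equations [V_n,V_m] = (m−n)V_{n+m} for n,m odd, = (m−n)(V_{n+m}+α²V_{n+m−2}) for n,m even, = (m−n)V_{n+m}+(m−n−1)α²V_{n+m−2} for n odd, m even. Then the commutator ideal [W_{1,α²}, W_{1,α²}] equals the span of {V_n : n ≥ 3}, and consequently dim W_{1,α²}/[W_{1,α²},W_{1,α²}] = 2. -/

import Mathlib

noncomputable section

/-- Index set: integers `n ≥ 1`. -/
abbrev PosIdx : Type := {n : ℤ // 1 ≤ n}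

/-- Bilinear extension of structure constants `C` to a bracket on the free module. -/
def brP (C : PosIdx → PosIdx → (PosIdx →₀ ℂ)) (x y : PosIdx →₀ ℂ) : PosIdx →₀ ℂ :=
  x.sum fun n a => y.sum fun m b => (a * b) • C n m

/-- Structure constants of `W_{1,α²}`, defined by parity and extended skew-symmetrically. -/
def w1C (α : ℂ) (n m : PosIdx) : PosIdx →₀ ℂ :=
  if h1 : Odd n.1 then
    if h2 : Odd m.1 then
      Finsupp.single ⟨n.1 + m.1, by have := n.2; have := m.2; omega⟩ ((m.1 : ℂ) - n.1)
    else
      Finsupp.single ⟨n.1 + m.1, by have := n.2; have := m.2; omega⟩ ((m.1 : ℂ) - n.1)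
        + Finsupp.single ⟨n.1 + m.1 - 2, by
            have := n.2; have := m.2
            obtain ⟨k, hk⟩ := Int.not_odd_iff_even.mp h2; omega⟩
          (((m.1 : ℂ) - n.1 - 1) * α ^ 2)
  else
    if h2 : Odd m.1 then
      -(Finsupp.single ⟨n.1 + m.1, by have := n.2; have := m.2; omega⟩ ((n.1 : ℂ) - m.1)
        + Finsupp.single ⟨n.1 + m.1 - 2, by
            have := n.2; have := m.2
            obtain ⟨k, hk⟩ := Int.not_odd_iff_even.mp h1; omega⟩
          (((n.1 : ℂ) - m.1 - 1) * α ^ 2))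
    else
      Finsupp.single ⟨n.1 + m.1, by have := n.2; have := m.2; omega⟩ ((m.1 : ℂ) - n.1)
        + Finsupp.single ⟨n.1 + m.1 - 2, by
            have := n.2; have := m.2
            obtain ⟨k, hk⟩ := Int.not_odd_iff_even.mp h1; omega⟩
          (((m.1 : ℂ) - n.1) * α ^ 2)

def sIdx : Set PosIdx := {n | 3 ≤ n.1}

lemma w1C_mem (α : ℂ) (n m : PosIdx) : w1C α n m ∈ Finsupp.supported ℂ ℂ sIdx := by
  rw [Finsupp.mem_supported']
  intro p hp
  simp only [sIdx, Set.mem_setOf_eq, not_le] at hp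
  have hn := n.2; have hm := m.2; have hp1 := p.2
  unfold w1C
  split_ifs with h1 h2 h2
  · rw [Finsupp.single_apply]
    split_ifs with e
    · have h : n.1 = m.1 := by
        have := congrArg Subtype.val e; simp only at this; omega
      rw [h]; ring
    · rfl
  · obtain ⟨k, hk⟩ := Int.not_odd_iff_even.mp h2
    obtain ⟨j, hj⟩ := h1
    rw [Finsupp.add_apply, Finsupp.single_apply, Finsupp.single_apply]
    rw [if_neg (by intro e; have := congrArg Subtype.val e; simp only at this; omega)]
    split_ifs with e
    · have := congrArg Subtype.val e; simp only at this
      have h1' : n.1 = 1 := by omega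
      have h2' : m.1 = 2 := by omega
      rw [h1', h2']; norm_num
    · norm_num
  · obtain ⟨k, hk⟩ := Int.not_odd_iff_even.mp h1
    obtain ⟨j, hj⟩ := h2
    rw [Finsupp.neg_apply, Finsupp.add_apply, Finsupp.single_apply, Finsupp.single_apply]
    rw [if_neg (by intro e; have := congrArg Subtype.val e; simp only at this; omega)]
    split_ifs with e
    · have := congrArg Subtype.val e; simp only at this
      have h1' : n.1 = 2 := by omega
      have h2' : m.1 = 1 := by omega
      rw [h1', h2']; norm_num
    · norm_num
  · obtain ⟨k, hk⟩ := Int.not_odd_iff_even.mp h1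
    obtain ⟨l, hl⟩ := Int.not_odd_iff_even.mp h2
    rw [Finsupp.add_apply, Finsupp.single_apply, Finsupp.single_apply]
    rw [if_neg (by intro e; have := congrArg Subtype.val e; simp only at this; omega)]
    split_ifs with e
    · have := congrArg Subtype.val e; simp only at this
      have h : n.1 = m.1 := by omega
      rw [h]; ring
    · norm_num

lemma brP_mem (α : ℂ) (x y : PosIdx →₀ ℂ) :
    brP (w1C α) x y ∈ Finsupp.supported ℂ ℂ sIdx := by
  unfold brP
  refine Submodule.finsuppSum_mem ℂ _ x _ fun n _ => ?_
  refine Submodule.finsuppSum_mem ℂ _ y _ fun m _ => ?_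
  exact Submodule.smul_mem _ _ (w1C_mem α n m)

lemma brP_single (C : PosIdx → PosIdx → (PosIdx →₀ ℂ)) (n m : PosIdx) (a b : ℂ) :
    brP C (Finsupp.single n a) (Finsupp.single m b) = (a * b) • C n m := by
  unfold brP
  rw [Finsupp.sum_single_index, Finsupp.sum_single_index] <;> simp

lemma w1C_one_odd (α : ℂ) (m : ℤ) (hm : 1 ≤ m) (h : Odd m) :
    w1C α ⟨1, le_refl 1⟩ ⟨m, hm⟩
      = Finsupp.single ⟨1 + m, by omega⟩ ((m : ℂ) - 1) := by
  unfold w1C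
  rw [dif_pos odd_one, dif_pos h]
  norm_num

lemma w1C_one_even (α : ℂ) (m : ℤ) (hm : 1 ≤ m) (h : Even m) :
    w1C α ⟨1, le_refl 1⟩ ⟨m, hm⟩
      = Finsupp.single ⟨1 + m, by omega⟩ ((m : ℂ) - 1)
        + Finsupp.single ⟨m - 1, by obtain ⟨k, hk⟩ := h; omega⟩ (((m : ℂ) - 2) * α ^ 2) := by
  unfold w1C
  rw [dif_pos odd_one, dif_neg (Int.not_odd_iff_even.mpr h)]
  ext p
  rcases p with ⟨p, hp⟩
  simp only [Finsupp.add_apply, Finsupp.single_apply, Subtype.mk.injEq]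
  push_cast
  split_ifs <;> first | (exfalso; omega) | ring

def Kspan (α : ℂ) : Submodule ℂ (PosIdx →₀ ℂ) :=
  Submodule.span ℂ {z : PosIdx →₀ ℂ | ∃ x y, z = brP (w1C α) x y}

lemma w1C_mem_K (α : ℂ) (n m : PosIdx) : w1C α n m ∈ Kspan α := by
  apply Submodule.subset_span
  exact ⟨Finsupp.single n 1, Finsupp.single m 1, by rw [brP_single]; simp⟩

lemma single_unit {K : Submodule ℂ (PosIdx →₀ ℂ)} {k : PosIdx} {c : ℂ} (hc : c ≠ 0)
    (h : Finsupp.single k c ∈ K) : Finsupp.single k 1 ∈ K := by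
  have h2 := K.smul_mem c⁻¹ h
  rwa [Finsupp.smul_single, smul_eq_mul, inv_mul_cancel₀ hc] at h2

lemma mem3 (α : ℂ) : Finsupp.single (⟨3, by norm_num⟩ : PosIdx) 1 ∈ Kspan α := by
  have h := w1C_mem_K α ⟨1, le_refl 1⟩ ⟨2, by norm_num⟩
  rw [w1C_one_even α 2 (by norm_num) ⟨1, by norm_num⟩] at h
  norm_num at h
  convert h using 3

lemma memEven (α : ℂ) (k : ℤ) (hk : 4 ≤ k) (he : Even k) :
    Finsupp.single (⟨k, by omega⟩ : PosIdx) 1 ∈ Kspan α := by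
  obtain ⟨r, hr⟩ := he
  have h := w1C_mem_K α ⟨1, le_refl 1⟩ ⟨k - 1, by omega⟩
  rw [w1C_one_odd α (k - 1) (by omega) ⟨r - 1, by omega⟩] at h
  have hc : ((k - 1 : ℤ) : ℂ) - 1 ≠ 0 := by
    have : ((k - 1 : ℤ) : ℂ) - 1 = ((k - 2 : ℤ) : ℂ) := by push_cast; ring
    rw [this]
    exact Int.cast_ne_zero.mpr (by omega)
  have h2 := single_unit hc h
  convert h2 using 3
  omega

lemma memOddStep (α : ℂ) (k : ℤ) (hk : 5 ≤ k) (ho : Odd k)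
    (prev : Finsupp.single (⟨k - 2, by omega⟩ : PosIdx) 1 ∈ Kspan α) :
    Finsupp.single (⟨k, by omega⟩ : PosIdx) 1 ∈ Kspan α := by
  obtain ⟨r, hr⟩ := ho
  have h := w1C_mem_K α ⟨1, le_refl 1⟩ ⟨k - 1, by omega⟩
  rw [w1C_one_even α (k - 1) (by omega) ⟨r, by omega⟩] at h
  set c2 : ℂ := (((k - 1 : ℤ) : ℂ) - 2) * α ^ 2 with hc2
  have hlow : Finsupp.single (⟨k - 1 - 1, by omega⟩ : PosIdx) c2 ∈ Kspan α := by
    have h3 := (Kspan α).smul_mem c2 prev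
    rw [Finsupp.smul_single, smul_eq_mul, mul_one] at h3
    convert h3 using 3
    omega
  have h4 := (Kspan α).sub_mem h hlow
  rw [add_sub_cancel_right] at h4
  have hc : ((k - 1 : ℤ) : ℂ) - 1 ≠ 0 := by
    have : ((k - 1 : ℤ) : ℂ) - 1 = ((k - 2 : ℤ) : ℂ) := by push_cast; ring
    rw [this]
    exact Int.cast_ne_zero.mpr (by omega)
  have h5 := single_unit hc h4
  convert h5 using 3
  omega

lemma mem_all (α : ℂ) : ∀ N : ℕ, ∀ k : ℤ, (hk : 3 ≤ k) → k ≤ 3 + N →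
    Finsupp.single (⟨k, by omega⟩ : PosIdx) 1 ∈ Kspan α := by
  intro N
  induction N with
  | zero =>
    intro k hk hk2
    have : k = 3 := by omega
    subst this
    exact mem3 α
  | succ N ih =>
    intro k hk hk2
    rcases lt_or_ge k (3 + (N + 1) : ℤ) with h | h
    · exact ih k hk (by omega)
    · have hkval : k = 4 + N := by omega
      rcases Int.even_or_odd k with he | ho
      · exact memEven α k (by omega) he
      · obtain ⟨r, hr⟩ := ho
        rcases Nat.eq_zero_or_pos N with h0 | h0
        · exfalso; omega
        · exact memOddStep α k (by omega) ⟨r, hr⟩ (ih (k - 2) (by omega) (by omega))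

/-- The commutator ideal of `W_{1,α²}` is the span of `{V_n : n ≥ 3}`, and the quotient
by it has dimension `2`. -/
theorem w1_commutator_ideal (α : ℂ) (hα : α ≠ 0) :
    Submodule.span ℂ {z : PosIdx →₀ ℂ | ∃ x y, z = brP (w1C α) x y}
      = Submodule.span ℂ {z : PosIdx →₀ ℂ | ∃ n : PosIdx, 3 ≤ n.1 ∧ z = Finsupp.single n 1} ∧
    Module.finrank ℂ
      ((PosIdx →₀ ℂ) ⧸ Submodule.span ℂ {z : PosIdx →₀ ℂ | ∃ x y, z = brP (w1C α) x y}) = 2 := by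
  have hset : {z : PosIdx →₀ ℂ | ∃ n : PosIdx, 3 ≤ n.1 ∧ z = Finsupp.single n 1}
      = (fun i => Finsupp.single i (1 : ℂ)) '' sIdx := by
    ext z
    constructor
    · rintro ⟨n, hn, rfl⟩; exact ⟨n, hn, rfl⟩
    · rintro ⟨n, hn, rfl⟩; exact ⟨n, hn, rfl⟩
  have h1 : Kspan α ≤ Finsupp.supported ℂ ℂ sIdx := by
    rw [Kspan, Submodule.span_le]
    rintro z ⟨x, y, rfl⟩
    exact brP_mem α x y
  have h2 : Finsupp.supported ℂ ℂ sIdx ≤ Kspan α := by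
    rw [Finsupp.supported_eq_span_single, Submodule.span_le]
    rintro z ⟨n, hn, rfl⟩
    obtain ⟨k, hk⟩ := n
    have hn3 : (3 : ℤ) ≤ k := hn
    exact mem_all α (k - 3).toNat k hn3 (by omega)
  have hKs : Kspan α = Finsupp.supported ℂ ℂ sIdx := le_antisymm h1 h2
  have hEq : Kspan α
      = Submodule.span ℂ {z : PosIdx →₀ ℂ | ∃ n : PosIdx, 3 ≤ n.1 ∧ z = Finsupp.single n 1} := by
    rw [hset, ← Finsupp.supported_eq_span_single, hKs]
  refine ⟨hEq, ?_⟩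
  set f : (PosIdx →₀ ℂ) →ₗ[ℂ] ℂ × ℂ :=
    (Finsupp.lapply (⟨1, le_refl 1⟩ : PosIdx)).prod (Finsupp.lapply ⟨2, by norm_num⟩) with hf
  have hker : LinearMap.ker f = Finsupp.supported ℂ ℂ sIdx := by
    ext x
    simp only [LinearMap.mem_ker, hf, LinearMap.prod_apply, Function.prod, Finsupp.lapply_apply,
      Prod.mk_eq_zero, Finsupp.mem_supported']
    constructor
    · rintro ⟨ha, hb⟩ p hp
      rcases p with ⟨v, hv⟩
      simp only [sIdx, Set.mem_setOf_eq, not_le] at hp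
      have : v = 1 ∨ v = 2 := by omega
      rcases this with rfl | rfl
      · exact ha
      · exact hb
    · intro h
      exact ⟨h _ (by simp [sIdx]), h _ (by simp [sIdx])⟩
  have hsurj : Function.Surjective f := by
    rintro ⟨a, b⟩
    refine ⟨Finsupp.single ⟨1, le_refl 1⟩ a + Finsupp.single ⟨2, by norm_num⟩ b, ?_⟩
    simp [hf, Finsupp.single_apply, Prod.ext_iff, Subtype.mk.injEq]
  have hkf : Submodule.span ℂ {z : PosIdx →₀ ℂ | ∃ x y, z = brP (w1C α) x y}
      = LinearMap.ker f := by
    rw [show Submodule.span ℂ {z : PosIdx →₀ ℂ | ∃ x y, z = brP (w1C α) x y} = Kspan α from rfl,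
      hKs, hker]
  rw [hkf]
  have e := f.quotKerEquivOfSurjective hsurj
  rw [e.finrank_eq]
  simp [Module.finrank_prod]
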